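/- arXiv:0906.1466 — 4 statements merged into one kernel-verified Lean document; each statement's English description precedes it below -/
import Mathlib

section
/- The point P = (1, 4) on the elliptic curve E has infinite order in E(ℚ); that is, for every positive integer n, n·P ≠ O. (Consequently the cuspidal divisor P − O is not torsion in the Picard group of E.) -/
/-- The elliptic curve `E : y² = x³ + 5x + 10` (curve 400H1 in Cremona's tables),
given as a Weierstrass curve over `ℚ` with `a₁ = a₂ = a₃ = 0`, `a₄ = 5`, `a₆ = 10`. -/
def E : WeierstrassCurve.Affine ℚ := { a₁ := 0, a₂ := 0, a₃ := 0, a₄ := 5, a₆ := 10 }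

lemma hP : E.Nonsingular 1 4 := by
  simp [E, WeierstrassCurve.Affine.nonsingular_iff, WeierstrassCurve.Affine.equation_iff]
  norm_num

/-- The rational point `P = (1, 4)` on `E`. -/
noncomputable def P : E.Point := .some _ _ hP

open WeierstrassCurve.Affine WeierstrassCurve.Affine.Point

lemma q2 : padicNorm 2 (2:ℚ) = 1/2 := by
  rw [show ((2:ℚ)) = ((2:ℕ):ℚ) by norm_num, padicNorm.padicNorm_p (by norm_num)]; norm_num

lemma q3 : padicNorm 2 (3:ℚ) = 1 := by
  rw [show (3:ℚ) = ((3:ℤ):ℚ) by norm_num, padicNorm.int_eq_one_iff]; decide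

lemma q5 : padicNorm 2 (5:ℚ) = 1 := by
  rw [show (5:ℚ) = ((5:ℤ):ℚ) by norm_num, padicNorm.int_eq_one_iff]; decide

lemma qsq (x : ℚ) : padicNorm 2 (x^2) = (padicNorm 2 x)^2 := by
  rw [sq, sq, padicNorm.mul]

lemma qcube (x : ℚ) : padicNorm 2 (x^3) = (padicNorm 2 x)^3 := by
  rw [show x^3 = x^2 * x by ring, padicNorm.mul, qsq]; ring

lemma eqn_of_ns {x y : ℚ} (h : E.Nonsingular x y) : y^2 = x^3 + 5*x + 10 := by
  have := h.1
  rw [WeierstrassCurve.Affine.equation_iff] at this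
  simpa [E] using this

lemma qy_sq {x y : ℚ} (h : E.Nonsingular x y) {m : ℕ} (hm : 2 ≤ m)
    (hx : padicNorm 2 x = 2^m) :
    (padicNorm 2 y)^2 = 2^(3*m) := by
  have heq := eqn_of_ns h
  have h5x : padicNorm 2 (5*x) = 2^m := by
    rw [padicNorm.mul, q5, one_mul, hx]
  have hx3 : padicNorm 2 (x^3) = 2^(3*m) := by rw [qcube, hx, ← pow_mul, mul_comm]
  have h1 : padicNorm 2 (x^3 + 5*x) = 2^(3*m) := by
    rw [padicNorm.add_eq_max_of_ne (by
      rw [hx3, h5x]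
      exact ne_of_gt (pow_lt_pow_right₀ (by norm_num) (by omega)))]
    rw [hx3, h5x]
    exact max_eq_left (pow_le_pow_right₀ (by norm_num) (by omega))
  have h10 : padicNorm 2 (10:ℚ) = 1/2 := by
    rw [show (10:ℚ) = 2 * 5 by norm_num, padicNorm.mul, q2, q5, mul_one]
  have h2 : padicNorm 2 (x^3 + 5*x + 10) = 2^(3*m) := by
    rw [padicNorm.add_eq_max_of_ne (by
      rw [h1, h10]
      have : (1:ℚ) ≤ 2^(3*m) := one_le_pow₀ (by norm_num)
      intro hcon; rw [hcon] at this; norm_num at this)]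
    rw [h1, h10]
    exact max_eq_left (le_trans (by norm_num) (one_le_pow₀ (by norm_num : (1:ℚ) ≤ 2)))
  rw [← qsq, heq, h2]

lemma key {x y : ℚ} (h : E.Nonsingular x y) {m : ℕ} (hm : 2 ≤ m)
    (hx : padicNorm 2 x = 2^m) :
    ∃ (x' y' : ℚ) (h' : E.Nonsingular x' y'),
      Point.some _ _ h + Point.some _ _ h = Point.some _ _ h' ∧ padicNorm 2 x' = 2^(m+2) := by
  have hy2 := qy_sq h hm hx
  have hy0 : y ≠ 0 := by
    intro h0
    rw [h0] at hy2
    simp at hy2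
    have hpos : (0:ℚ) < 2^(3*m) := by positivity
    rw [← hy2] at hpos; norm_num at hpos
  have hne : y ≠ E.negY x y := by
    simp only [WeierstrassCurve.Affine.negY, E]
    intro hcon
    apply hy0
    norm_num at hcon
    linarith [hcon]
  refine ⟨_, _, _, add_self_of_Y_ne hne, ?_⟩
  have hslope : E.slope x x y y = (3*x^2 + 5) / (2*y) := by
    rw [slope_of_Y_ne rfl hne]
    simp only [WeierstrassCurve.Affine.negY, E]
    ring_nf
  have hnum : padicNorm 2 (3*x^2 + 5) = 2^(2*m) := by
    have h3x2 : padicNorm 2 (3*x^2) = 2^(2*m) := by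
      rw [padicNorm.mul, q3, one_mul, qsq, hx, ← pow_mul, mul_comm]
    rw [padicNorm.add_eq_max_of_ne (by
      rw [h3x2, q5]
      exact ne_of_gt (one_lt_pow₀ (by norm_num) (by omega)))]
    rw [h3x2, q5]
    exact max_eq_left (le_of_lt (one_lt_pow₀ (by norm_num) (by omega)))
  have hden : (padicNorm 2 (2*y))^2 = (1/4) * 2^(3*m) := by
    rw [padicNorm.mul, mul_pow, q2, hy2]; norm_num
  have hql2 : (padicNorm 2 (E.slope x x y y))^2 = 2^(m+2) := by
    rw [hslope, padicNorm.div, div_pow, hden, hnum]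
    rw [div_eq_iff (by positivity)]
    rw [← pow_mul]
    have : (2:ℚ)^(m+2) * (1/4 * 2^(3*m)) = 2^(m+2) * 2^(3*m) / 4 := by ring
    rw [this, ← pow_add, show m+2+3*m = 2*m*2+2 by omega, pow_add]
    norm_num
  have haddx : E.addX x x (E.slope x x y y) = (E.slope x x y y)^2 + -(x + x) := by
    simp only [WeierstrassCurve.Affine.addX, E]
    ring
  have hxx : padicNorm 2 (x + x) ≤ 2^m := by
    have := padicNorm.nonarchimedean (p := 2) (q := x) (r := x)
    rw [hx] at this; simpa using this
  rw [haddx, padicNorm.add_eq_max_of_ne (by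
    rw [qsq, hql2, padicNorm.neg]
    exact ne_of_gt (lt_of_le_of_lt hxx (pow_lt_pow_right₀ (by norm_num) (by omega))))]
  rw [qsq, hql2, padicNorm.neg]
  exact max_eq_left (le_trans hxx (le_of_lt (pow_lt_pow_right₀ (by norm_num) (by omega))))

lemma some_congr {x₁ y₁ x₂ y₂ : ℚ} (h₁ : E.Nonsingular x₁ y₁) (h₂ : E.Nonsingular x₂ y₂)
    (hx : x₁ = x₂) (hy : y₁ = y₂) : Point.some _ _ h₁ = Point.some _ _ h₂ := by
  subst hx; subst hy; rfl

lemma qpow (x : ℚ) (n : ℕ) : padicNorm 2 (x^n) = (padicNorm 2 x)^n := by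
  induction n with
  | zero => simp
  | succ n ih => rw [pow_succ, pow_succ, padicNorm.mul, ih]

lemma ns2 : E.Nonsingular (-1) (-2) := by
  simp [E, WeierstrassCurve.Affine.nonsingular_iff, WeierstrassCurve.Affine.equation_iff]
  norm_num

lemma ns4 : E.Nonsingular 6 16 := by
  simp [E, WeierstrassCurve.Affine.nonsingular_iff, WeierstrassCurve.Affine.equation_iff]
  norm_num

lemma ns8 : E.Nonsingular (481/1024) (115631/32768) := by
  simp [E, WeierstrassCurve.Affine.nonsingular_iff, WeierstrassCurve.Affine.equation_iff]
  norm_num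

lemma e2 : P + P = Point.some _ _ ns2 := by
  have hy1 : (4:ℚ) ≠ E.negY 1 4 := by simp [E, WeierstrassCurve.Affine.negY]; norm_num
  rw [P, add_self_of_Y_ne hy1]
  refine some_congr _ _ ?_ ?_ <;>
    simp [WeierstrassCurve.Affine.addY, WeierstrassCurve.Affine.negAddY,
      WeierstrassCurve.Affine.addX, WeierstrassCurve.Affine.negY,
      slope_of_Y_ne rfl hy1, E] <;> norm_num

lemma e4 : Point.some _ _ ns2 + Point.some _ _ ns2 = Point.some _ _ ns4 := by
  have hy1 : (-2:ℚ) ≠ E.negY (-1) (-2) := by simp [E, WeierstrassCurve.Affine.negY]; norm_num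
  rw [add_self_of_Y_ne hy1]
  refine some_congr _ _ ?_ ?_ <;>
    simp [WeierstrassCurve.Affine.addY, WeierstrassCurve.Affine.negAddY,
      WeierstrassCurve.Affine.addX, WeierstrassCurve.Affine.negY,
      slope_of_Y_ne rfl hy1, E] <;> norm_num

lemma e8 : Point.some _ _ ns4 + Point.some _ _ ns4 = Point.some _ _ ns8 := by
  have hy1 : (16:ℚ) ≠ E.negY 6 16 := by simp [E, WeierstrassCurve.Affine.negY]; norm_num
  rw [add_self_of_Y_ne hy1]
  refine some_congr _ _ ?_ ?_ <;>
    simp [WeierstrassCurve.Affine.addY, WeierstrassCurve.Affine.negAddY,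
      WeierstrassCurve.Affine.addX, WeierstrassCurve.Affine.negY,
      slope_of_Y_ne rfl hy1, E] <;> norm_num

lemma q8 : padicNorm 2 ((481:ℚ)/1024) = 2^10 := by
  rw [padicNorm.div]
  rw [show (481:ℚ) = ((481:ℤ):ℚ) by norm_num,
    show padicNorm 2 ((481:ℤ):ℚ) = 1 from (padicNorm.int_eq_one_iff 481).mpr (by decide)]
  rw [show (1024:ℚ) = 2^10 by norm_num, qpow, q2]
  norm_num

lemma multP (k : ℕ) : ∃ (x y : ℚ) (h : E.Nonsingular x y),
    (2^(k+3):ℕ) • P = Point.some _ _ h ∧ padicNorm 2 x = 2^(2*k+10) := by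
  induction k with
  | zero =>
    refine ⟨481/1024, 115631/32768, ns8, ?_, by simpa using q8⟩
    have : (2^(0+3):ℕ) • P = 2 • (2 • (2 • P)) := by
      rw [← mul_smul, ← mul_smul]; norm_num
    rw [this, two_nsmul P, e2, two_nsmul (Point.some _ _ ns2), e4, two_nsmul (Point.some _ _ ns4), e8]
  | succ k ih =>
    obtain ⟨x, y, h, he, hq⟩ := ih
    obtain ⟨x', y', h', he', hq'⟩ := key h (by omega) hq
    refine ⟨x', y', h', ?_, by rw [show 2*(k+1)+10 = 2*k+10+2 by omega]; exact hq'⟩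
    rw [show k+1+3 = (k+3)+1 by omega, pow_succ, mul_comm, mul_smul, he, two_nsmul, he']

/-- The point `P = (1, 4)` has infinite order in `E(ℚ)`: `n • P ≠ O` for every
positive integer `n`. -/
theorem P_infinite_order : ∀ n : ℕ, 0 < n → n • P ≠ 0 := by
  intro n hn h0
  haveI : NeZero n := ⟨hn.ne'⟩
  obtain ⟨k₁, k₂, hne, heq⟩ :=
    Finite.exists_ne_map_eq_of_infinite (fun k : ℕ => ((2^(k+3) : ℕ) : ZMod n))
  have hmod : 2^(k₁+3) ≡ 2^(k₂+3) [MOD n] := (ZMod.natCast_eq_natCast_iff _ _ _).mp heq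
  have hsmul : (2^(k₁+3):ℕ) • P = (2^(k₂+3):ℕ) • P := by
    rw [nsmul_eq_nsmul_iff_modEq]
    exact hmod.of_dvd (addOrderOf_dvd_of_nsmul_eq_zero h0)
  obtain ⟨x₁, y₁, h₁, he₁, hq₁⟩ := multP k₁
  obtain ⟨x₂, y₂, h₂, he₂, hq₂⟩ := multP k₂
  rw [he₁, he₂] at hsmul
  have hx : x₁ = x₂ := (Point.some.inj hsmul).1
  apply hne
  have hqq : (2:ℚ)^(2*k₁+10) = 2^(2*k₂+10) := by rw [← hq₁, ← hq₂, hx]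
  have := (pow_right_strictMono₀ (by norm_num : (1:ℚ) < 2)).injective hqq
  omega
end

section
/- For every complex number t with t ≠ 16 and t ≠ −16, the set {(x, y) ∈ ℂ × ℂ : y² = x³ + 5x + 10 and y·(x − 5) = t} has exactly 5 elements. (This expresses that the degree-5 map (x,y) ↦ y(x−5) on the complex points of E is unramified away from the critical values ±16 and ∞.) -/
open Polynomial

lemma aux_roots_eq (p : ℂ[X]) (hp : p ≠ 0) :
    {x : ℂ | p.IsRoot x} = ↑p.roots.toFinset := by
  ext x
  simp [Polynomial.mem_roots', hp, Polynomial.IsRoot]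

lemma aux_roots_finite (p : ℂ[X]) (hp : p ≠ 0) :
    {x : ℂ | p.IsRoot x}.Finite := by
  rw [aux_roots_eq p hp]; exact (p.roots.toFinset).finite_toSet

lemma aux_ncard_roots (p : ℂ[X]) (hp : p ≠ 0) (hsep : p.Separable) :
    {x : ℂ | p.IsRoot x}.ncard = p.natDegree := by
  rw [aux_roots_eq p hp, Set.ncard_coe_finset,
    Multiset.toFinset_card_of_nodup (p.nodup_roots hsep),
    ← Polynomial.splits_iff_card_roots.mp (IsAlgClosed.splits p)]

/-- For every complex number `t ≠ ±16`, the fibre of the degree-5 map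
`(x, y) ↦ y·(x − 5)` on the complex points of `E : y² = x³ + 5x + 10` over `t`
has exactly 5 elements; i.e. the map is unramified away from its critical values
`±16` and `∞`. -/
theorem fibre_card_eq_five (t : ℂ) (h16 : t ≠ 16) (h16' : t ≠ -16) :
    {p : ℂ × ℂ | p.2 ^ 2 = p.1 ^ 3 + 5 * p.1 + 10 ∧ p.2 * (p.1 - 5) = t}.ncard = 5 := by
  by_cases ht : t = 0
  · -- t = 0 : the fibre consists of the three points with y = 0 and (5, ±√160)
    subst ht
    obtain ⟨s, hs⟩ := IsAlgClosed.exists_pow_nat_eq (160 : ℂ) two_pos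
    have hs0 : s ≠ 0 := by
      intro h; rw [h] at hs; norm_num at hs
    set Q : ℂ[X] := X ^ 3 + C 5 * X + C 10 with hQ
    have hQd : Q.derivative = C 3 * X ^ 2 + C 5 := by
      simp [hQ, derivative_pow, map_ofNat]
    have hQdeg : Q.natDegree = 3 := by rw [hQ]; compute_degree!
    have hQ0 : Q ≠ 0 := fun h => by simp [h] at hQdeg
    have hQsep : Q.Separable := by
      rw [Polynomial.Separable, hQd]
      refine ⟨C (320⁻¹ : ℂ) * (C (-9) * X + C 27),
        C (320⁻¹ : ℂ) * (C 3 * X ^ 2 - C 9 * X + C 10), ?_⟩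
      have key : (C (320⁻¹ : ℂ) * (C (-9) * X + C 27)) * Q +
          (C (320⁻¹ : ℂ) * (C 3 * X ^ 2 - C 9 * X + C 10)) * (C 3 * X ^ 2 + C 5)
          = C (320⁻¹ : ℂ) * C 320 := by
        simp only [hQ, map_ofNat, map_neg]
        ring
      rw [key, ← C_mul]
      norm_num
    have hdecomp : {p : ℂ × ℂ | p.2 ^ 2 = p.1 ^ 3 + 5 * p.1 + 10 ∧ p.2 * (p.1 - 5) = 0}
        = ((fun r => (r, (0 : ℂ))) '' {x : ℂ | Q.IsRoot x}) ∪ {(5, s), (5, -s)} := by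
      ext ⟨x, y⟩
      simp only [Set.mem_setOf_eq, Set.mem_union, Set.mem_image, Set.mem_insert_iff,
        Set.mem_singleton_iff, Prod.mk.injEq, IsRoot, hQ]
      constructor
      · rintro ⟨h1, h2⟩
        rcases mul_eq_zero.mp h2 with hy | hx5
        · left
          exact ⟨x, by simp [map_ofNat]; linear_combination -h1 + hy * y + hy * 0, rfl, hy.symm⟩
        · right
          have hx : x = 5 := sub_eq_zero.mp hx5
          subst hx
          have hy2 : y ^ 2 = s ^ 2 := by rw [hs]; linear_combination h1
          have : (y - s) * (y + s) = 0 := by linear_combination hy2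
          rcases mul_eq_zero.mp this with h | h
          · exact Or.inl ⟨rfl, sub_eq_zero.mp h⟩
          · exact Or.inr ⟨rfl, by linear_combination h⟩
      · rintro (⟨r, hr, hrx, hry⟩ | ⟨hx, hy⟩ | ⟨hx, hy⟩)
        · subst hrx
          refine ⟨?_, by rw [← hry]; ring⟩
          simp [map_ofNat] at hr
          rw [← hry]; linear_combination -hr
        · subst hx; subst hy
          constructor
          · rw [hs]; norm_num
          · ring
        · subst hx; subst hy
          constructor
          · rw [neg_pow, hs]; norm_num
          · ring
    rw [hdecomp]
    have hAfin : ((fun r => (r, (0 : ℂ))) '' {x : ℂ | Q.IsRoot x}).Finite :=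
      (aux_roots_finite Q hQ0).image _
    have hBfin : ({(5, s), (5, -s)} : Set (ℂ × ℂ)).Finite :=
      (Set.finite_singleton _).insert _
    have hdisj : Disjoint ((fun r => (r, (0 : ℂ))) '' {x : ℂ | Q.IsRoot x})
        ({(5, s), (5, -s)} : Set (ℂ × ℂ)) := by
      rw [Set.disjoint_left]
      rintro p ⟨r, _, rfl⟩ hmem
      simp only [Set.mem_insert_iff, Set.mem_singleton_iff, Prod.mk.injEq] at hmem
      rcases hmem with ⟨_, h⟩ | ⟨_, h⟩
      · exact hs0 h.symm
      · exact hs0 (by linear_combination h)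
    rw [Set.ncard_union_eq hdisj hAfin hBfin]
    have hinj : Function.Injective (fun r : ℂ => (r, (0 : ℂ))) := by
      intro a b hab; simpa using hab
    rw [Set.ncard_image_of_injective _ hinj, aux_ncard_roots Q hQ0 hQsep, hQdeg,
      Set.ncard_pair (by
        intro h
        rw [Prod.mk.injEq] at h
        exact hs0 (by linear_combination h.2 / 2))]
  · -- t ≠ 0 : the fibre is in bijection with the roots of the separable quintic
    -- P = (X-5)²(X³+5X+10) - t²
    set P : ℂ[X] := (X - C 5) ^ 2 * (X ^ 3 + C 5 * X + C 10) - C (t ^ 2) with hP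
    have hPdeg : P.natDegree = 5 := by rw [hP]; compute_degree!
    have hP0 : P ≠ 0 := fun h => by simp [h] at hPdeg
    have hPd : P.derivative = C 5 * ((X - C 5) * (X - C 1) ^ 3) := by
      rw [hP]
      simp [derivative_pow, map_ofNat]
      ring
    have ht256 : t ^ 2 ≠ 256 := by
      intro h
      have : (t - 16) * (t + 16) = 0 := by linear_combination h
      rcases mul_eq_zero.mp this with h' | h'
      · exact h16 (by linear_combination h')
      · exact h16' (by linear_combination h')
    have hev5 : P.eval 5 = -t ^ 2 := by simp [hP]
    have hev1 : P.eval 1 = 256 - t ^ 2 := by simp [hP]; norm_num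
    have hcop5 : IsCoprime (X - C (5 : ℂ)) P :=
      (irreducible_X_sub_C (5 : ℂ)).coprime_iff_not_dvd.mpr
        (fun hd => by
          have := (dvd_iff_isRoot).mp hd
          rw [IsRoot, hev5] at this
          exact ht (by simpa [pow_eq_zero_iff] using neg_eq_zero.mp this))
    have hcop1 : IsCoprime (X - C (1 : ℂ)) P :=
      (irreducible_X_sub_C (1 : ℂ)).coprime_iff_not_dvd.mpr
        (fun hd => by
          have := (dvd_iff_isRoot).mp hd
          rw [IsRoot, hev1] at this
          exact ht256 (by linear_combination -this))
    have hcopC : IsCoprime P (C (5 : ℂ)) :=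
      ⟨0, C (5⁻¹ : ℂ), by rw [zero_mul, zero_add, ← C_mul]; norm_num⟩
    have hPsep : P.Separable := by
      rw [Polynomial.Separable, hPd]
      exact hcopC.mul_right (hcop5.symm.mul_right (hcop1.symm.pow_right))
    set S : Set (ℂ × ℂ) :=
      {p : ℂ × ℂ | p.2 ^ 2 = p.1 ^ 3 + 5 * p.1 + 10 ∧ p.2 * (p.1 - 5) = t} with hS
    have hinj : Set.InjOn Prod.fst S := by
      rintro ⟨x1, y1⟩ h1 ⟨x2, y2⟩ h2 hx
      simp only at hx
      subst hx
      have hx5 : x1 - 5 ≠ 0 := by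
        intro h
        exact ht (by rw [← h1.2, h, mul_zero])
      have : y1 = y2 := mul_right_cancel₀ hx5 (h1.2.trans h2.2.symm)
      simp [this]
    have himg : Prod.fst '' S = {x : ℂ | P.IsRoot x} := by
      ext x
      constructor
      · rintro ⟨⟨a, b⟩, ⟨hb, hab⟩, rfl⟩
        simp only [Set.mem_setOf_eq, IsRoot, hP]
        simp only [eval_sub, eval_mul, eval_pow, eval_add, eval_X, eval_C]
        linear_combination (-(a - 5) ^ 2) * hb + (b * (a - 5) + t) * hab
      · intro hx
        simp only [Set.mem_setOf_eq, IsRoot, hP, eval_sub, eval_mul, eval_pow, eval_add,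
          eval_X, eval_C] at hx
        have hx5 : x - 5 ≠ 0 := by
          intro h
          rw [h] at hx
          exact ht (by simpa [pow_eq_zero_iff] using (by linear_combination -hx : t ^ 2 = 0))
        refine ⟨(x, t / (x - 5)), ⟨?_, ?_⟩, rfl⟩
        · field_simp
          linear_combination -hx
        · field_simp
    rw [← Set.ncard_image_of_injOn hinj, himg, aux_ncard_roots P hP0 hPsep, hPdeg]
end

section
/- The fibres of the map (x,y) ↦ y(x−5) over its finite critical values ±16 are: {(x, y) ∈ ℂ × ℂ : y² = x³ + 5x + 10 and y·(x − 5) = −16} = {(1, 4), (6, −16)}, and {(x, y) ∈ ℂ × ℂ : y² = x³ + 5x + 10 and y·(x − 5) = 16} = {(1, −4), (6, 16)}. -/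
/-- The fibres of the map `(x, y) ↦ y·(x − 5)` on the complex points of
`E : y² = x³ + 5x + 10` over its finite critical values `−16` and `16` are
`{(1, 4), (6, −16)}` and `{(1, −4), (6, 16)}` respectively. -/
theorem fibres_over_critical_values :
    {p : ℂ × ℂ | p.2 ^ 2 = p.1 ^ 3 + 5 * p.1 + 10 ∧ p.2 * (p.1 - 5) = -16} =
      {((1 : ℂ), (4 : ℂ)), ((6 : ℂ), (-16 : ℂ))} ∧
    {p : ℂ × ℂ | p.2 ^ 2 = p.1 ^ 3 + 5 * p.1 + 10 ∧ p.2 * (p.1 - 5) = 16} =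
      {((1 : ℂ), (-4 : ℂ)), ((6 : ℂ), (16 : ℂ))} := by
  constructor
  · ext ⟨x, y⟩
    simp only [Set.mem_setOf_eq, Set.mem_insert_iff, Set.mem_singleton_iff, Prod.mk.injEq]
    constructor
    · rintro ⟨h1, h2⟩
      have key : (x - 1) ^ 4 * (x - 6) = 0 := by
        linear_combination (-(x - 5) ^ 2) * h1 + (y * (x - 5) - 16) * h2
      rcases mul_eq_zero.mp key with h | h
      · have hx : x = 1 := by
          have := pow_eq_zero_iff (n := 4) (by norm_num) |>.mp h
          exact sub_eq_zero.mp this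
        left
        refine ⟨hx, ?_⟩
        subst hx
        have : y * (-4) = -16 := by linear_combination h2
        linear_combination (-1/4 : ℂ) * this
      · have hx : x = 6 := by linear_combination h
        right
        refine ⟨hx, ?_⟩
        subst hx
        linear_combination h2
    · rintro (⟨hx, hy⟩ | ⟨hx, hy⟩) <;> subst hx <;> subst hy <;> norm_num
  · ext ⟨x, y⟩
    simp only [Set.mem_setOf_eq, Set.mem_insert_iff, Set.mem_singleton_iff, Prod.mk.injEq]
    constructor
    · rintro ⟨h1, h2⟩
      have key : (x - 1) ^ 4 * (x - 6) = 0 := by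
        linear_combination (-(x - 5) ^ 2) * h1 + (y * (x - 5) + 16) * h2
      rcases mul_eq_zero.mp key with h | h
      · have hx : x = 1 := by
          have := pow_eq_zero_iff (n := 4) (by norm_num) |>.mp h
          exact sub_eq_zero.mp this
        left
        refine ⟨hx, ?_⟩
        subst hx
        have : y * (-4) = 16 := by linear_combination h2
        linear_combination (-1/4 : ℂ) * this
      · have hx : x = 6 := by linear_combination h
        right
        refine ⟨hx, ?_⟩
        subst hx
        linear_combination h2
    · rintro (⟨hx, hy⟩ | ⟨hx, hy⟩) <;> subst hx <;> subst hy <;> norm_num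
end

section
/- Let A = ℤ[X]/(X³ + 5X − 246, 32) and let m be the (maximal) ideal of A generated by the images of 2 and X. Then the localization of A at m is isomorphic as a ring to ℤ/32ℤ. -/
open Polynomial

/-- The ring `A = ℤ[X]/(X³ + 5X − 246, 32)`. -/
noncomputable abbrev A : Type :=
  ℤ[X] ⧸ Ideal.span ({X ^ 3 + 5 * X - 246, 32} : Set ℤ[X])

/-- The ideal of `A` generated by the images of `2` and `X`. -/
noncomputable def m : Ideal A :=
  Ideal.span {(2 : A), Ideal.Quotient.mk _ X}

/-- Reduction map `A → ℤ/2`, `X ↦ 0`. -/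
noncomputable def psi : A →+* ZMod 2 :=
  Ideal.Quotient.lift _ (eval₂RingHom (Int.castRingHom (ZMod 2)) 0) (by
    intro p hp
    refine (Ideal.span_le (I := RingHom.ker (eval₂RingHom (Int.castRingHom (ZMod 2)) 0))).mpr ?_ hp
    rintro q (rfl | rfl) <;> simp [RingHom.mem_ker] <;> decide)

/-- Evaluation map `A → ℤ/32`, `X ↦ 6`. -/
noncomputable def phi : A →+* ZMod 32 :=
  Ideal.Quotient.lift _ (eval₂RingHom (Int.castRingHom (ZMod 32)) 6) (by
    intro p hp
    refine (Ideal.span_le (I := RingHom.ker (eval₂RingHom (Int.castRingHom (ZMod 32)) 6))).mpr ?_ hp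
    rintro q (rfl | rfl) <;> simp [RingHom.mem_ker] <;> decide)

lemma psi_mk (p : ℤ[X]) : psi (Ideal.Quotient.mk _ p) = ((p.coeff 0 : ℤ) : ZMod 2) := by
  show eval₂RingHom (Int.castRingHom (ZMod 2)) 0 p = _
  simp [eval₂_at_zero]

lemma phi_mk (p : ℤ[X]) : phi (Ideal.Quotient.mk _ p) = ((p.eval 6 : ℤ) : ZMod 32) := by
  have : ((6 : ℤ) : ZMod 32) = (Int.castRingHom (ZMod 32)) 6 := rfl
  show eval₂RingHom (Int.castRingHom (ZMod 32)) 6 p = _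
  simp only [coe_eval₂RingHom]
  rw [show (6 : ZMod 32) = (Int.castRingHom (ZMod 32)) 6 by rfl, eval₂_at_apply]
  rfl

lemma m_eq_ker : m = RingHom.ker psi := by
  apply le_antisymm
  · rw [m, Ideal.span_le]
    rintro q (rfl | rfl)
    · show psi 2 = 0
      rw [show psi 2 = ((2 : ℕ) : ZMod 2) from map_natCast psi 2]
      decide
    · rw [SetLike.mem_coe, RingHom.mem_ker, psi_mk]; simp
  · rintro a ha
    obtain ⟨p, rfl⟩ := Ideal.Quotient.mk_surjective a
    rw [RingHom.mem_ker, psi_mk, ZMod.intCast_zmod_eq_zero_iff_dvd] at ha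
    have h2 : (2:ℤ) ∣ p.coeff 0 := by exact_mod_cast ha
    obtain ⟨k, hk⟩ := h2
    have hp : p = p.divX * X + C (p.coeff 0) := (divX_mul_X_add p).symm
    rw [hp, map_add, map_mul]
    refine Ideal.add_mem _ (Ideal.mul_mem_left _ _ (Ideal.subset_span (Or.inr rfl))) ?_
    have h3 : (Ideal.Quotient.mk _ (C (p.coeff 0)) : A) = 2 * Ideal.Quotient.mk _ (C k) := by
      rw [hk, map_mul, map_mul]
      norm_num
      rfl
    rw [h3]
    exact Ideal.mul_mem_right _ _ (Ideal.subset_span (Or.inl rfl))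

lemma psi_surj : Function.Surjective psi := by
  intro z
  obtain ⟨n, rfl⟩ := ZMod.intCast_surjective z
  exact ⟨(n : A), by rw [show ((n : ℤ) : A) = Ideal.Quotient.mk _ (C (n:ℤ)) by push_cast; simp, psi_mk]; simp⟩

lemma hm_max : m.IsMaximal := by
  rw [m_eq_ker]; exact RingHom.ker_isMaximal_of_surjective psi psi_surj

lemma cast_phi (a : A) :
    (ZMod.castHom (show (2:ℕ) ∣ 32 by norm_num) (ZMod 2)) (phi a) = psi a := by
  obtain ⟨p, rfl⟩ := Ideal.Quotient.mk_surjective a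
  rw [phi_mk, psi_mk, map_intCast]
  rw [ZMod.intCast_eq_intCast_iff]
  have h1 : (6 : ℤ) - 0 ∣ p.eval 6 - p.eval 0 := sub_dvd_eval_sub 6 0 p
  have h2 : (2 : ℤ) ∣ p.eval 6 - p.eval 0 := dvd_trans (by norm_num) h1
  rw [coeff_zero_eq_eval_zero]
  exact (Int.modEq_iff_dvd.mpr (by simpa using h2.neg_right.neg_right)).symm

lemma unit_of_odd (z : ZMod 32)
    (h : (ZMod.castHom (show (2:ℕ) ∣ 32 by norm_num) (ZMod 2)) z ≠ 0) : IsUnit z := by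
  have : ∀ z : ZMod 32, (ZMod.castHom (show (2:ℕ) ∣ 32 by norm_num) (ZMod 2)) z ≠ 0 →
      ∃ b, z * b = 1 := by decide
  exact isUnit_iff_exists_inv.mpr (this z h)

lemma cofactor_not_mem : (Ideal.Quotient.mk _ (X^2 + 6*X + 41 : ℤ[X]) : A) ∉ m := by
  rw [m_eq_ker, RingHom.mem_ker, psi_mk, coeff_zero_eq_eval_zero]
  norm_num
  decide

lemma phi_surj : Function.Surjective phi := by
  intro z
  obtain ⟨n, rfl⟩ := ZMod.intCast_surjective z
  exact ⟨(n : A), by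
    rw [show ((n : ℤ) : A) = Ideal.Quotient.mk _ (C (n:ℤ)) by push_cast; simp, phi_mk]; simp⟩

lemma kill (a : A) (ha : phi a = 0) :
    (Ideal.Quotient.mk _ (X^2 + 6*X + 41 : ℤ[X]) : A) * a = 0 := by
  obtain ⟨p, rfl⟩ := Ideal.Quotient.mk_surjective a
  rw [phi_mk, ZMod.intCast_zmod_eq_zero_iff_dvd] at ha
  obtain ⟨k, hk⟩ := ha
  obtain ⟨q, hq⟩ := X_sub_C_dvd_sub_C_eval (a := (6:ℤ)) (p := p)
  have hp : p = (X - C 6) * q + C (p.eval 6) := by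
    rw [← hq]; ring
  have key : (X^2 + 6*X + 41 : ℤ[X]) * p
      = (X^3 + 5*X - 246) * q + 32 * ((X^2 + 6*X + 41) * C k) := by
    rw [hk] at hp
    rw [hp]
    simp only [map_mul, map_natCast, map_ofNat]
    ring
  rw [← map_mul, Ideal.Quotient.eq_zero_iff_mem, key]
  exact Ideal.add_mem _
    (Ideal.mul_mem_right _ _ (Ideal.subset_span (Or.inl rfl)))
    (Ideal.mul_mem_right _ _ (Ideal.subset_span (Or.inr rfl)))

/-- The ideal `m = (2, X)` of `A = ℤ[X]/(X³ + 5X − 246, 32)` is maximal, and the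
localization of `A` at `m` is isomorphic to `ℤ/32ℤ`. -/
theorem localization_at_m_iso_zmod32 :
    ∃ hm : m.IsMaximal, Nonempty (@Localization.AtPrime A _ m hm.isPrime ≃+* ZMod 32) := by
  refine ⟨hm_max, ⟨?_⟩⟩
  haveI := hm_max.isPrime
  letI : Algebra A (ZMod 32) := phi.toAlgebra
  haveI : IsLocalization m.primeCompl (ZMod 32) := by
    constructor
    constructor
    · rintro ⟨y, hy⟩
      show IsUnit (phi y)
      refine unit_of_odd _ ?_
      rw [cast_phi]
      intro h0
      exact hy (m_eq_ker ▸ (RingHom.mem_ker.mpr h0))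
    · intro z
      obtain ⟨a, ha⟩ := phi_surj z
      refine ⟨(a, 1), ?_⟩
      show z * phi ((1 : m.primeCompl) : A) = phi a
      simp [ha]
    · intro a b h
      refine ⟨⟨Ideal.Quotient.mk _ (X^2 + 6*X + 41 : ℤ[X]), cofactor_not_mem⟩, ?_⟩
      have hk := kill (a - b) (by rw [map_sub, show phi a = phi b from h, sub_self])
      rw [mul_sub] at hk
      exact sub_eq_zero.mp hk
  exact (IsLocalization.algEquiv m.primeCompl (Localization.AtPrime m) (ZMod 32)).toRingEquiv
end
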